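/- Let p be a prime and A ∈ GL_d(ℤ) with det A coprime to p. If the characteristic polynomial f of A is irreducible modulo p, then any p-primitive vectors u, v ∈ 𝓡_t^d form a proper pair: the sequence u_n = v·Aⁿ·u does not satisfy any linear recurrence relation modulo p of length less than d. -/
import Mathlib


open Polynomial Matrix Finset

/-- The pair `(u, v)` is *proper* for `A` modulo `p` if the sequence `u_n = v·Aⁿ·u` does not
satisfy any linear recurrence relation modulo `p` of length less than `d`. -/
def Proper (p d : ℕ) (A : Matrix (Fin d) (Fin d) ℤ) (u v : Fin d → ℤ) : Prop :=
  ∀ e : ℕ, e < d → ∀ b : Fin e → ZMod p,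
    ¬ (∀ n : ℕ, ((v ⬝ᵥ (A ^ (n + e)).mulVec u : ℤ) : ZMod p) =
        ∑ i : Fin e, b i * ((v ⬝ᵥ (A ^ (n + (i : ℕ))).mulVec u : ℤ) : ZMod p))

set_option maxHeartbeats 1600000 in
/-- Let `p` be a prime and `A ∈ GL_d(ℤ)` with `det A` coprime to `p`. If the
characteristic polynomial `f` of `A` is irreducible modulo `p`, then any `p`-primitive vectors
`u, v` form a proper pair. -/
theorem stmt16 (p d : ℕ) (hp : p.Prime) (hd : 0 < d)
    (A : Matrix (Fin d) (Fin d) ℤ) (hA : IsUnit A.det) (hgcd : Int.gcd A.det p = 1)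
    (hirr : Irreducible (A.charpoly.map (Int.castRingHom (ZMod p))))
    (u v : Fin d → ℤ)
    (hu : ∃ i, ¬ (p : ℤ) ∣ u i) (hv : ∃ i, ¬ (p : ℤ) ∣ v i) :
    Proper p d A u v := by
  haveI : Fact p.Prime := ⟨hp⟩
  intro e he b hrec
  set φ := Int.castRingHom (ZMod p) with hφ
  set B : Matrix (Fin d) (Fin d) (ZMod p) := A.map φ with hBdef
  set f := B.charpoly with hfdef
  have hirr' : Irreducible f := by
    rw [hfdef, Matrix.charpoly_map]; exact hirr
  set u' : Fin d → ZMod p := fun i => φ (u i) with hu'def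
  set v' : Fin d → ZMod p := fun i => φ (v i) with hv'def
  have hu' : u' ≠ 0 := by
    intro h
    obtain ⟨i, hi⟩ := hu
    exact hi ((ZMod.intCast_zmod_eq_zero_iff_dvd _ _).mp (congrFun h i))
  have hv' : v' ≠ 0 := by
    intro h
    obtain ⟨i, hi⟩ := hv
    exact hi ((ZMod.intCast_zmod_eq_zero_iff_dvd _ _).mp (congrFun h i))
  -- casting the integer sequence to `ZMod p`
  have hpowmap : ∀ m : ℕ, (A ^ m).map φ = B ^ m := by
    intro m
    rw [hBdef, ← RingHom.mapMatrix_apply, ← RingHom.mapMatrix_apply, map_pow]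
  have hcast : ∀ m : ℕ,
      ((v ⬝ᵥ (A ^ m).mulVec u : ℤ) : ZMod p) = v' ⬝ᵥ (B ^ m).mulVec u' := by
    intro m
    have h1 : ((v ⬝ᵥ (A ^ m).mulVec u : ℤ) : ZMod p)
        = (φ ∘ v) ⬝ᵥ (φ ∘ (A ^ m).mulVec u) := RingHom.map_dotProduct φ _ _
    rw [h1]
    congr 1
    funext i
    rw [Function.comp_apply, RingHom.map_mulVec, hpowmap m]
    rfl
  -- the polynomial encoding the recurrence
  set g : Polynomial (ZMod p) := X ^ e - ∑ i : Fin e, C (b i) * X ^ (i : ℕ) with hgdef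
  have hsum0 : (∑ i : Fin e, C (b i) * X ^ (i : ℕ)).coeff e = 0 := by
    rw [finset_sum_coeff]
    refine Finset.sum_eq_zero fun i _ => ?_
    rw [coeff_C_mul, coeff_X_pow, if_neg i.2.ne', mul_zero]
  have hce : g.coeff e = 1 := by
    rw [hgdef, coeff_sub, hsum0, sub_zero, coeff_X_pow]
    simp
  have hg0 : g ≠ 0 := by
    intro h
    rw [h, coeff_zero] at hce
    exact (zero_ne_one : (0 : ZMod p) ≠ 1) hce
  have hgle : g.degree ≤ (e : ℕ) := by
    rw [hgdef]
    refine le_trans (degree_sub_le _ _) (max_le (by simpa using degree_X_pow_le e) ?_)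
    refine le_trans (degree_sum_le _ _) ?_
    refine Finset.sup_le fun i _ => ?_
    exact le_trans (degree_C_mul_X_pow_le _ _) (by exact_mod_cast Nat.cast_le.mpr i.2.le)
  have hfdeg : f.degree = (d : ℕ) := by
    have := Matrix.charpoly_degree_eq_dim B
    rwa [Fintype.card_fin] at this
  have hnotdvd : ¬ f ∣ g := by
    intro h
    have h1 := Polynomial.degree_le_of_dvd h hg0
    rw [hfdeg] at h1
    have h2 : ((d : ℕ) : WithBot ℕ) ≤ (e : ℕ) := le_trans h1 hgle
    exact absurd (by exact_mod_cast h2) (not_le.mpr he)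
  have hcop : IsCoprime f g := hirr'.coprime_iff_not_dvd.mpr hnotdvd
  obtain ⟨a, c, hac⟩ := hcop
  have hfB : aeval B f = 0 := Matrix.aeval_self_charpoly B
  have hinv : (aeval B c) * (aeval B g) = 1 := by
    have h1 := congrArg (aeval B) hac
    simp only [map_add, _root_.map_mul, hfB, mul_zero, zero_add, _root_.map_one] at h1; exact h1
  set w : Fin d → ZMod p := (aeval B g).mulVec u' with hwdef
  have hw0 : w ≠ 0 := by
    intro h
    apply hu'
    calc u' = (1 : Matrix (Fin d) (Fin d) (ZMod p)).mulVec u' := by simp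
    _ = ((aeval B c) * (aeval B g)).mulVec u' := by rw [hinv]
    _ = (aeval B c).mulVec w := by rw [← Matrix.mulVec_mulVec, ← hwdef]
    _ = 0 := by rw [h, Matrix.mulVec_zero]
  -- a linear functional packaging `M ↦ v' ⬝ (M u')`
  set L : Matrix (Fin d) (Fin d) (ZMod p) →ₗ[ZMod p] ZMod p :=
    { toFun := fun M => v' ⬝ᵥ M.mulVec u'
      map_add' := fun M N => by
        show v' ⬝ᵥ (M + N).mulVec u' = v' ⬝ᵥ M.mulVec u' + v' ⬝ᵥ N.mulVec u'
        rw [Matrix.add_mulVec, dotProduct_add]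
      map_smul' := fun r M => by
        show v' ⬝ᵥ (r • M).mulVec u' = r • (v' ⬝ᵥ M.mulVec u')
        rw [Matrix.smul_mulVec, dotProduct_smul] } with hLdef
  have hLapp : ∀ M, L M = v' ⬝ᵥ M.mulVec u' := fun M => rfl
  -- the key recurrence: `v' ⬝ (Bⁿ w) = 0` for all `n`
  have Hkey : ∀ n : ℕ, v' ⬝ᵥ (B ^ n).mulVec w = 0 := by
    intro n
    have expand : (X : Polynomial (ZMod p)) ^ n * g
        = X ^ (n + e) - ∑ i : Fin e, C (b i) * X ^ (n + (i : ℕ)) := by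
      rw [hgdef, mul_sub, Finset.mul_sum, ← pow_add]
      congr 1
      refine Finset.sum_congr rfl fun i _ => ?_
      ring
    have h1 : v' ⬝ᵥ (B ^ n).mulVec w = L (aeval B (X ^ n * g)) := by
      rw [hLapp, _root_.map_mul, aeval_X_pow, ← Matrix.mulVec_mulVec, ← hwdef]
    have h2 : L (aeval B ((X : Polynomial (ZMod p)) ^ (n + e)))
        = ((v ⬝ᵥ (A ^ (n + e)).mulVec u : ℤ) : ZMod p) := by
      rw [aeval_X_pow, hLapp]; exact (hcast (n + e)).symm
    have h3 : ∀ i : Fin e, L (aeval B (C (b i) * X ^ (n + (i : ℕ))))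
        = b i * ((v ⬝ᵥ (A ^ (n + (i : ℕ))).mulVec u : ℤ) : ZMod p) := by
      intro i
      rw [_root_.map_mul, aeval_C, aeval_X_pow, ← Algebra.smul_def, _root_.map_smul,
        smul_eq_mul, hLapp, ← hcast]
    rw [h1, expand, map_sub, map_sum, map_sub, map_sum, h2,
      Finset.sum_congr rfl (fun i _ => h3 i), hrec n, sub_self]
  -- the linear map from `K[X]/(f)` to `K^d`
  haveI : Fact (Irreducible f) := ⟨hirr'⟩
  haveI := (AdjoinRoot.powerBasis hirr'.ne_zero).finite
  have hker : ∀ x ∈ Ideal.span {f}, aeval B x = 0 := by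
    intro x hx
    obtain ⟨y, rfl⟩ := Ideal.mem_span_singleton.mp hx
    rw [_root_.map_mul, hfB, zero_mul]
  set lift : AdjoinRoot f →ₐ[ZMod p] Matrix (Fin d) (Fin d) (ZMod p) :=
    Ideal.Quotient.liftₐ (Ideal.span {f}) (aeval B) hker with hliftdef
  set Φ : Matrix (Fin d) (Fin d) (ZMod p) →ₗ[ZMod p] (Fin d → ZMod p) :=
    { toFun := fun M => M.mulVec w
      map_add' := fun M N => Matrix.add_mulVec M N w
      map_smul' := fun r M => by
        show (r • M).mulVec w = r • M.mulVec w
        rw [Matrix.smul_mulVec] } with hΦdef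
  set ψ : AdjoinRoot f →ₗ[ZMod p] (Fin d → ZMod p) := Φ.comp lift.toLinearMap with hψdef
  have hψapp : ∀ z : AdjoinRoot f, ψ z = (lift z).mulVec w := fun z => rfl
  have hliftmk : ∀ q : Polynomial (ZMod p), lift (AdjoinRoot.mk f q) = aeval B q :=
    fun q => rfl
  have hψ : ∀ q : Polynomial (ZMod p), ψ (AdjoinRoot.mk f q) = (aeval B q).mulVec w := by
    intro q
    rw [hψapp, hliftmk]
  have hinj : Function.Injective ψ := by
    rw [← LinearMap.ker_eq_bot, LinearMap.ker_eq_bot']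
    intro z hz
    by_contra hz0
    apply hw0
    have h1 : ψ (z⁻¹ * z) = 0 := by
      rw [hψapp, _root_.map_mul, ← Matrix.mulVec_mulVec, ← hψapp z, hz, Matrix.mulVec_zero]
    rw [inv_mul_cancel₀ hz0, hψapp, _root_.map_one, Matrix.one_mulVec] at h1
    exact h1
  have hfr : Module.finrank (ZMod p) (AdjoinRoot f)
      = Module.finrank (ZMod p) (Fin d → ZMod p) := by
    rw [(AdjoinRoot.powerBasis hirr'.ne_zero).finrank, AdjoinRoot.powerBasis_dim,
      Module.finrank_pi, hfdef, Matrix.charpoly_natDegree_eq_dim]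
  have hsurj : Function.Surjective ψ :=
    (LinearMap.injective_iff_surjective_of_finrank_eq_finrank hfr).mp hinj
  -- every vector is annihilated by `v'`, contradiction
  have hann : ∀ q : Polynomial (ZMod p), v' ⬝ᵥ (aeval B q).mulVec w = 0 := by
    intro q
    induction q using Polynomial.induction_on' with
    | add s t hs ht =>
      rw [map_add, Matrix.add_mulVec, dotProduct_add, hs, ht, add_zero]
    | monomial n r =>
      rw [aeval_monomial, ← Algebra.smul_def, Matrix.smul_mulVec, dotProduct_smul,
        Hkey n, smul_zero]
  apply hv'
  funext j
  obtain ⟨z, hz⟩ := hsurj (Pi.single j 1)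
  obtain ⟨q, rfl⟩ := AdjoinRoot.mk_surjective z
  have h0 : v' ⬝ᵥ Pi.single j 1 = 0 := by
    rw [← hz, hψ]
    exact hann q
  rwa [dotProduct_single, mul_one] at h0
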